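/- arXiv:0806.2984 — 2 statements merged into one kernel-verified Lean document; each statement's English description precedes it below -/
import Mathlib

section
/- Let r, s > 0 be real numbers with rs > 1, set X = r p² + (pq + qp) + s q² and S = s^{1/2} q + s^{−1/2} p, viewed as operators on C_c^∞(ℝ,ℂ). Then for every u ∈ C_c^∞(ℝ,ℂ): ⟨u, X² u⟩ = (r − 1/s)² ⟨u, p⁴ u⟩ + 2(r − 1/s) ⟨u, p S² p u⟩ + ⟨u, S⁴ u⟩ − 2(rs − 1) ‖u‖². -/
open MeasureTheory Complex
open scoped ComplexOrder

noncomputable section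

/-- Operators acting on complex-valued functions on `ℝ`. -/
abbrev Op : Type := (ℝ → ℂ) → (ℝ → ℂ)

/-- The momentum operator `(p u)(x) = -i u'(x)`. -/
def pOp : Op := fun u x => -Complex.I * deriv u x

/-- The position operator `(q u)(x) = x * u(x)`. -/
def qOp : Op := fun u x => (x : ℂ) * u x

/-- Multiplication operator by a real-valued function. -/
def mulOp (f : ℝ → ℝ) : Op := fun u x => (f x : ℂ) * u x

/-- Commutator of two operators. -/
def opComm (A B : Op) : Op := fun u => A (B u) - B (A u)

/-- Anticommutator of two operators. -/
def opACom (A B : Op) : Op := fun u => A (B u) + B (A u)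

/-- The `L²(ℝ,ℂ)` inner product, antilinear in the first argument. -/
def ip (u v : ℝ → ℂ) : ℂ := ∫ x : ℝ, (starRingEnd ℂ) (u x) * v x

/-- `u ∈ C_c^∞(ℝ,ℂ)`: smooth and compactly supported. -/
def IsTest (u : ℝ → ℂ) : Prop := ContDiff ℝ (⊤ : ℕ∞) u ∧ HasCompactSupport u

/-- `X = r p² + (pq + qp) + s q²`. -/
def Xop (r s : ℝ) : Op := (r : ℂ) • (pOp ∘ pOp) + opACom pOp qOp + (s : ℂ) • (qOp ∘ qOp)

/-- `S = s^{1/2} q + s^{−1/2} p`. -/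
def Sop (s : ℝ) : Op := ((Real.sqrt s : ℝ) : ℂ) • qOp + (((Real.sqrt s)⁻¹ : ℝ) : ℂ) • pOp

lemma pOp_def (u : ℝ → ℂ) : pOp u = fun x => -Complex.I * deriv u x := rfl
lemma qOp_def (u : ℝ → ℂ) : qOp u = fun x : ℝ => (x:ℂ) * u x := rfl

-- helpers
lemma hR (x : ℝ) : HasDerivAt (fun y : ℝ => (y:ℂ)) 1 x := by
  simpa using (hasDerivAt_id x).ofReal_comp

lemma hD {u : ℝ → ℂ} (hu : ContDiff ℝ (⊤:ℕ∞) u) (x : ℝ) : HasDerivAt u (deriv u x) x :=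
  (hu.differentiable (by simp) x).hasDerivAt

lemma smooth_deriv {u : ℝ → ℂ} (hu : ContDiff ℝ (⊤:ℕ∞) u) : ContDiff ℝ (⊤:ℕ∞) (deriv u) :=
  (contDiff_infty_iff_deriv.mp hu).2

lemma deriv_cmul (c : ℂ) {f : ℝ → ℂ} (hf : ContDiff ℝ (⊤:ℕ∞) f) :
    deriv (fun x => c * f x) = fun x => c * deriv f x :=
  funext fun x => deriv_const_mul c (hf.differentiable (by simp) x)

/-- canonical second-order form -/
def cform (a s : ℝ) (u : ℝ → ℂ) : ℝ → ℂ := fun x =>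
  -(a:ℂ) * deriv (deriv u) x - Complex.I * u x - 2*Complex.I*(x:ℂ)*deriv u x
    + (s:ℂ)*(x:ℂ)*(x:ℂ)*u x

def c1form (a s : ℝ) (u : ℝ → ℂ) : ℝ → ℂ := fun x =>
  -(a:ℂ) * deriv (deriv (deriv u)) x - 3*Complex.I*deriv u x - 2*Complex.I*(x:ℂ)*deriv (deriv u) x
    + 2*(s:ℂ)*(x:ℂ)*u x + (s:ℂ)*(x:ℂ)*(x:ℂ)*deriv u x

def c2form (a s : ℝ) (u : ℝ → ℂ) : ℝ → ℂ := fun x =>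
  -(a:ℂ) * deriv (deriv (deriv (deriv u))) x - 5*Complex.I*deriv (deriv u) x
    - 2*Complex.I*(x:ℂ)*deriv (deriv (deriv u)) x + 2*(s:ℂ)*u x + 4*(s:ℂ)*(x:ℂ)*deriv u x
    + (s:ℂ)*(x:ℂ)*(x:ℂ)*deriv (deriv u) x

lemma cform_smooth {u : ℝ → ℂ} (hu : ContDiff ℝ (⊤:ℕ∞) u) (a s : ℝ) :
    ContDiff ℝ (⊤:ℕ∞) (cform a s u) := by
  have h1 := smooth_deriv hu
  have h2 := smooth_deriv h1
  have hOR : ContDiff ℝ (⊤:ℕ∞) (fun x:ℝ => (x:ℂ)) := Complex.ofRealCLM.contDiff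
  unfold cform; fun_prop

lemma cform_hasDerivAt {u : ℝ → ℂ} (hu : ContDiff ℝ (⊤:ℕ∞) u) (a s : ℝ) (x : ℝ) :
    HasDerivAt (cform a s u) (c1form a s u x) x := by
  have h1 := smooth_deriv hu
  have h2 := smooth_deriv h1
  have t1 := (hD h2 x).const_mul (-(a:ℂ))
  have t2 := (hD hu x).const_mul (Complex.I)
  have t3 := ((hR x).const_mul (2*Complex.I)).mul (hD h1 x)
  have t4 := (((hR x).const_mul ((s:ℂ))).mul (hR x)).mul (hD hu x)
  have h := ((t1.sub t2).sub t3).add t4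
  exact h.congr_deriv (by simp only [c1form, Pi.mul_apply]; ring)

lemma cform_deriv {u : ℝ → ℂ} (hu : ContDiff ℝ (⊤:ℕ∞) u) (a s : ℝ) :
    deriv (cform a s u) = c1form a s u :=
  funext fun x => (cform_hasDerivAt hu a s x).deriv

lemma c1form_hasDerivAt {u : ℝ → ℂ} (hu : ContDiff ℝ (⊤:ℕ∞) u) (a s : ℝ) (x : ℝ) :
    HasDerivAt (c1form a s u) (c2form a s u x) x := by
  have h1 := smooth_deriv hu
  have h2 := smooth_deriv h1
  have h3 := smooth_deriv h2
  have t1 := (hD h3 x).const_mul (-(a:ℂ))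
  have t2 := (hD h1 x).const_mul (3*Complex.I)
  have t3 := ((hR x).const_mul (2*Complex.I)).mul (hD h2 x)
  have t4 := ((hR x).const_mul (2*(s:ℂ))).mul (hD hu x)
  have t5 := (((hR x).const_mul ((s:ℂ))).mul (hR x)).mul (hD h1 x)
  have h := (((t1.sub t2).sub t3).add t4).add t5
  exact h.congr_deriv (by simp only [c2form, Pi.mul_apply]; ring)

lemma cform_deriv2 {u : ℝ → ℂ} (hu : ContDiff ℝ (⊤:ℕ∞) u) (a s : ℝ) :
    deriv (deriv (cform a s u)) = c2form a s u := by
  rw [cform_deriv hu]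
  exact funext fun x => (c1form_hasDerivAt hu a s x).deriv

lemma cform_apply (a s : ℝ) (v : ℝ → ℂ) (x : ℝ) :
    cform a s v x = -(a:ℂ)*deriv (deriv v) x - Complex.I*v x - 2*Complex.I*(x:ℂ)*deriv v x
      + (s:ℂ)*(x:ℂ)*(x:ℂ)*v x := rfl

lemma Xop_eq (r s : ℝ) {u : ℝ → ℂ} (hu : ContDiff ℝ (⊤:ℕ∞) u) : Xop r s u = cform r s u := by
  funext x
  have h1 := smooth_deriv hu
  have hdq : deriv (fun y : ℝ => (y:ℂ) * u y) x = u x + (x:ℂ) * deriv u x := by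
    exact ((hR x).mul (hD hu x)).deriv.trans (by simp)
  simp only [Xop, Pi.add_apply, Pi.smul_apply, Function.comp_apply, opACom, pOp_def, qOp_def,
    smul_eq_mul, cform_apply, deriv_cmul (-Complex.I) h1]
  rw [hdq]
  linear_combination (r:ℂ) * deriv (deriv u) x * Complex.I_sq
lemma deriv_negf (g : ℝ → ℂ) : deriv (fun x => -(g x)) = fun x => -(deriv g x) :=
  funext fun x => deriv.neg

lemma pOp_smooth {u : ℝ → ℂ} (hu : ContDiff ℝ (⊤:ℕ∞) u) : ContDiff ℝ (⊤:ℕ∞) (pOp u) := by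
  rw [pOp_def]; exact contDiff_const.mul (smooth_deriv hu)

lemma pp_eq {u : ℝ → ℂ} (hu : ContDiff ℝ (⊤:ℕ∞) u) :
    pOp (pOp u) = fun x => -(deriv (deriv u) x) := by
  funext x
  simp only [pOp_def, deriv_cmul (-Complex.I) (smooth_deriv hu)]
  linear_combination (deriv (deriv u) x) * Complex.I_sq

lemma p4_eq {u : ℝ → ℂ} (hu : ContDiff ℝ (⊤:ℕ∞) u) :
    pOp (pOp (pOp (pOp u))) = fun x => deriv (deriv (deriv (deriv u))) x := by
  have h2 := smooth_deriv (smooth_deriv hu)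
  rw [pp_eq hu, pp_eq h2.neg]
  funext x
  rw [deriv_negf, deriv_negf]
  simp

lemma SS_eq {s : ℝ} (hs : 0 < s) {u : ℝ → ℂ} (hu : ContDiff ℝ (⊤:ℕ∞) u) :
    Sop s (Sop s u) = cform s⁻¹ s u := by
  have h1 := smooth_deriv hu
  set a := Real.sqrt s with ha
  have haa : ((a:ℝ):ℂ) * ((a:ℝ):ℂ) = ((s:ℝ):ℂ) := by
    rw [← Complex.ofReal_mul, Real.mul_self_sqrt hs.le]
  have ha0 : ((a:ℝ):ℂ) ≠ 0 := by
    simpa using Complex.ofReal_ne_zero.mpr (Real.sqrt_ne_zero'.mpr hs)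
  have hSu : Sop s u = fun y : ℝ =>
      (a:ℂ)*(y:ℂ)*u y + ((a⁻¹:ℝ):ℂ)*(-Complex.I)*deriv u y := by
    funext y
    simp only [Sop, Pi.add_apply, Pi.smul_apply, qOp_def, pOp_def, smul_eq_mul]
    ring
  funext x
  have hv : HasDerivAt (fun y : ℝ => (a:ℂ)*(y:ℂ)*u y + ((a⁻¹:ℝ):ℂ)*(-Complex.I)*deriv u y)
      (((a:ℂ)*1)*u x + ((a:ℂ)*(x:ℂ))*deriv u x + (((a⁻¹:ℝ):ℂ)*(-Complex.I))*deriv (deriv u) x) x := by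
    exact (((hR x).const_mul (a:ℂ)).mul (hD hu x)).add ((hD h1 x).const_mul (((a⁻¹:ℝ):ℂ)*(-Complex.I)))
  have hd : deriv (Sop s u) x
      = ((a:ℂ)*1)*u x + ((a:ℂ)*(x:ℂ))*deriv u x + (((a⁻¹:ℝ):ℂ)*(-Complex.I))*deriv (deriv u) x := by
    rw [hSu]; exact hv.deriv
  have lhs : Sop s (Sop s u) x
      = (a:ℂ)*(x:ℂ)*(Sop s u x) + ((a⁻¹:ℝ):ℂ)*(-Complex.I)*deriv (Sop s u) x := by
    simp only [Sop, Pi.add_apply, Pi.smul_apply, qOp_def, pOp_def, smul_eq_mul]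
    ring
  rw [lhs, hd, hSu, cform_apply]
  push_cast
  rw [← haa]
  field_simp
  linear_combination deriv (deriv u) x * Complex.I_sq
lemma S4_eq {s : ℝ} (hs : 0 < s) {u : ℝ → ℂ} (hu : ContDiff ℝ (⊤:ℕ∞) u) :
    Sop s (Sop s (Sop s (Sop s u))) = cform s⁻¹ s (cform s⁻¹ s u) := by
  rw [SS_eq hs hu, SS_eq hs (cform_smooth hu s⁻¹ s)]

lemma XX_eq (r s : ℝ) {u : ℝ → ℂ} (hu : ContDiff ℝ (⊤:ℕ∞) u) :
    Xop r s (Xop r s u) = cform r s (cform r s u) := by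
  rw [Xop_eq r s hu, Xop_eq r s (cform_smooth hu r s)]

lemma pssp_eq {s : ℝ} (hs : 0 < s) {u : ℝ → ℂ} (hu : ContDiff ℝ (⊤:ℕ∞) u) :
    pOp (Sop s (Sop s (pOp u))) = fun x => -Complex.I * c1form s⁻¹ s (pOp u) x := by
  rw [SS_eq hs (pOp_smooth hu)]
  funext x
  show -Complex.I * deriv (cform s⁻¹ s (pOp u)) x = _
  rw [cform_deriv (pOp_smooth hu)]

lemma key (r s : ℝ) (hs : 0 < s) {u : ℝ → ℂ} (hu : ContDiff ℝ (⊤:ℕ∞) u) :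
    Xop r s (Xop r s u) = fun x =>
      ((r - 1/s : ℝ) : ℂ)^2 * pOp (pOp (pOp (pOp u))) x
      + 2 * ((r - 1/s : ℝ) : ℂ) * pOp (Sop s (Sop s (pOp u))) x
      + Sop s (Sop s (Sop s (Sop s u))) x
      - 2 * ((r*s - 1 : ℝ) : ℂ) * u x := by
  have h1 := smooth_deriv hu
  have h2 := smooth_deriv h1
  have h3 := smooth_deriv h2
  have hs0 : ((s:ℝ):ℂ) ≠ 0 := Complex.ofReal_ne_zero.mpr hs.ne'
  have e1 : deriv (pOp u) = fun x => -Complex.I * deriv (deriv u) x := by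
    rw [pOp_def]; exact deriv_cmul _ h1
  have e2 : deriv (deriv (pOp u)) = fun x => -Complex.I * deriv (deriv (deriv u)) x := by
    rw [e1]; exact deriv_cmul _ h2
  have e3 : deriv (deriv (deriv (pOp u))) = fun x => -Complex.I * deriv (deriv (deriv (deriv u))) x := by
    rw [e2]; exact deriv_cmul _ h3
  rw [XX_eq r s hu, p4_eq hu, pssp_eq hs hu, S4_eq hs hu]
  funext x
  rw [cform_apply r s (cform r s u) x, cform_deriv2 hu r s, cform_deriv hu r s,
    cform_apply s⁻¹ s (cform s⁻¹ s u) x, cform_deriv2 hu s⁻¹ s, cform_deriv hu s⁻¹ s]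
  simp only [cform, c1form, c2form]
  rw [e3, e2, e1]
  simp only [pOp_def]
  have i2 : (Complex.I)^2 = -1 := Complex.I_sq
  have i3 : (Complex.I)^3 = -Complex.I := by rw [pow_succ, i2]; ring
  have i4 : (Complex.I)^4 = 1 := by rw [pow_succ, i3]; simp [Complex.I_mul_I]
  push_cast
  field_simp
  ring_nf
  simp only [i2, i3, i4]
  ring
lemma c1form_smooth {u : ℝ → ℂ} (hu : ContDiff ℝ (⊤:ℕ∞) u) (a s : ℝ) :
    ContDiff ℝ (⊤:ℕ∞) (c1form a s u) := by
  have h1 := smooth_deriv hu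
  have h2 := smooth_deriv h1
  have h3 := smooth_deriv h2
  have hOR : ContDiff ℝ (⊤:ℕ∞) (fun x:ℝ => (x:ℂ)) := Complex.ofRealCLM.contDiff
  unfold c1form; fun_prop

/-- `⟨u, X² u⟩ = (r − 1/s)² ⟨u, p⁴ u⟩ + 2(r − 1/s) ⟨u, p S² p u⟩ + ⟨u, S⁴ u⟩ − 2(rs − 1) ‖u‖²`. -/
theorem X_sq_identity_S (r s : ℝ) (hr : 0 < r) (hs : 0 < s) (hrs : 1 < r * s)
    (u : ℝ → ℂ) (hu : IsTest u) :
    ip u (Xop r s (Xop r s u)) =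
      ((r - 1/s : ℝ) : ℂ)^2 * ip u (pOp (pOp (pOp (pOp u))))
      + 2 * ((r - 1/s : ℝ) : ℂ) * ip u (pOp (Sop s (Sop s (pOp u))))
      + ip u (Sop s (Sop s (Sop s (Sop s u))))
      - 2 * ((r*s - 1 : ℝ) : ℂ) * ip u u := by
  obtain ⟨hus, huc⟩ := hu
  set c : ℂ := ((r - 1/s : ℝ) : ℂ) with hc
  set k : ℂ := ((r*s - 1 : ℝ) : ℂ) with hk
  set F2 := pOp (pOp (pOp (pOp u))) with hF2
  set F3 := pOp (Sop s (Sop s (pOp u))) with hF3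
  set F4 := Sop s (Sop s (Sop s (Sop s u))) with hF4
  have hcont : ∀ f : ℝ → ℂ, Continuous f → Integrable (fun x => (starRingEnd ℂ) (u x) * f x) := by
    intro f hf
    apply Continuous.integrable_of_hasCompactSupport
    · exact (continuous_star.comp hus.continuous).mul hf
    · exact (huc.comp_left (g := starRingEnd ℂ) (by simp)).mul_right
  have cF2 : Continuous F2 := by
    rw [hF2, p4_eq hus]
    exact (smooth_deriv (smooth_deriv (smooth_deriv (smooth_deriv hus)))).continuous
  have cF3 : Continuous F3 := by
    rw [hF3, pssp_eq hs hus]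
    exact (contDiff_const.mul (c1form_smooth (pOp_smooth hus) s⁻¹ s)).continuous
  have cF4 : Continuous F4 := by
    rw [hF4, S4_eq hs hus]
    exact (cform_smooth (cform_smooth hus s⁻¹ s) s⁻¹ s).continuous
  have iF2 := (hcont F2 cF2).const_mul (c^2)
  have iF3 := (hcont F3 cF3).const_mul (2*c)
  have iF4 := hcont F4 cF4
  have iuu := (hcont u hus.continuous).const_mul (2*k)
  have hip : ip u (Xop r s (Xop r s u)) =
      ∫ x : ℝ, (c^2 * ((starRingEnd ℂ) (u x) * F2 x) + 2*c*((starRingEnd ℂ) (u x) * F3 x)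
        + ((starRingEnd ℂ) (u x) * F4 x) - 2*k*((starRingEnd ℂ) (u x) * u x)) := by
    simp only [ip]
    congr 1
    funext x
    rw [congrFun (key r s hs hus) x]
    ring
  have iB : Integrable (fun x => c^2 * ((starRingEnd ℂ) (u x) * F2 x)
      + 2*c*((starRingEnd ℂ) (u x) * F3 x)) volume := iF2.add iF3
  have iA : Integrable (fun x => c^2 * ((starRingEnd ℂ) (u x) * F2 x)
      + 2*c*((starRingEnd ℂ) (u x) * F3 x) + ((starRingEnd ℂ) (u x) * F4 x)) volume := iB.add iF4
  rw [hip, integral_sub iA iuu, integral_add iB iF4, integral_add iF2 iF3,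
    integral_const_mul, integral_const_mul, integral_const_mul]
  rfl
end
end

section
/- Let r, s > 0 be real numbers with rs > 1 and set X = r p² + (pq + qp) + s q² on C_c^∞(ℝ,ℂ). Then for every u ∈ C_c^∞(ℝ,ℂ): ‖X u‖² + 2(rs − 1) ‖u‖² ≥ (1/4) · min{ (s − 1/r)², (r − 1/s)² } · ‖(p² + q²) u‖². -/
open MeasureTheory Complex
open scoped ComplexOrder

noncomputable section

/-- `p² + q²`. -/
def Nop : Op := fun v => pOp (pOp v) + qOp (qOp v)

variable {u v w : ℝ → ℂ}

lemma IsTest.diff (hu : IsTest u) : Differentiable ℝ u :=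
  hu.1.differentiable (by simp)

lemma IsTest.cont (hu : IsTest u) : Continuous u := hu.1.continuous

lemma IsTest.p (hu : IsTest u) : IsTest (pOp u) := by
  refine ⟨?_, ?_⟩
  · have h := (contDiff_infty_iff_deriv.mp hu.1).2
    exact contDiff_const.mul h
  · have h : HasCompactSupport (deriv u) := hu.2.deriv
    exact h.mul_left (f := fun _ => -Complex.I)

lemma IsTest.q (hu : IsTest u) : IsTest (qOp u) := by
  refine ⟨Complex.ofRealCLM.contDiff.mul hu.1, ?_⟩
  exact hu.2.mul_left (f := fun x : ℝ => (x : ℂ))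

lemma IsTest.add (hu : IsTest u) (hv : IsTest v) : IsTest (u + v) :=
  ⟨hu.1.add hv.1, hu.2.add hv.2⟩

lemma IsTest.smul (c : ℂ) (hu : IsTest u) : IsTest (c • u) :=
  ⟨hu.1.const_smul c, hu.2.smul_left⟩

lemma IsTest.sub (hu : IsTest u) (hv : IsTest v) : IsTest (u - v) := by
  have := hu.add (hv.smul (-1))
  simpa [sub_eq_add_neg, neg_one_smul] using this

lemma IsTest.N (hu : IsTest u) : IsTest (Nop u) := (hu.p.p).add hu.q.q

lemma IsTest.integrable_conj_mul (hu : IsTest u) (hv : IsTest v) :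
    Integrable (fun x => (starRingEnd ℂ) (u x) * v x) := by
  apply Continuous.integrable_of_hasCompactSupport
  · exact (Complex.continuous_conj.comp hu.cont).mul hv.cont
  · exact (hv.2.mul_left (f := fun x => (starRingEnd ℂ) (u x)))

lemma ip_conj_symm (u v : ℝ → ℂ) : ip u v = (starRingEnd ℂ) (ip v u) := by
  unfold ip
  rw [← integral_conj]
  congr 1; funext x; simp [mul_comm]

lemma ip_add_right (hu : IsTest u) (hv : IsTest v) (hw : IsTest w) :
    ip u (v + w) = ip u v + ip u w := by
  unfold ip
  simp only [Pi.add_apply, mul_add]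
  exact integral_add (hu.integrable_conj_mul hv) (hu.integrable_conj_mul hw)

lemma ip_smul_right (c : ℂ) (u v : ℝ → ℂ) : ip u (c • v) = c * ip u v := by
  unfold ip
  simp only [Pi.smul_apply, smul_eq_mul]
  rw [← integral_const_mul]
  congr 1; funext x; ring

lemma ip_smul_left (c : ℂ) (u v : ℝ → ℂ) :
    ip (c • u) v = (starRingEnd ℂ) c * ip u v := by
  unfold ip
  simp only [Pi.smul_apply, smul_eq_mul, map_mul]
  rw [← integral_const_mul]
  congr 1; funext x; ring

lemma ip_add_left (hu : IsTest u) (hv : IsTest v) (hw : IsTest w) :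
    ip (u + v) w = ip u w + ip v w := by
  rw [ip_conj_symm, ip_add_right hw hu hv, map_add, ← ip_conj_symm, ← ip_conj_symm]

lemma ip_sub_right (hu : IsTest u) (hv : IsTest v) (hw : IsTest w) :
    ip u (v - w) = ip u v - ip u w := by
  have h1 : v - w = v + (-1 : ℂ) • w := by funext x; simp [sub_eq_add_neg]
  rw [h1, ip_add_right hu hv (hw.smul _), ip_smul_right]
  ring

lemma ip_sub_left (hu : IsTest u) (hv : IsTest v) (hw : IsTest w) :
    ip (u - v) w = ip u w - ip v w := by
  have h1 : u - v = u + (-1 : ℂ) • v := by funext x; simp [sub_eq_add_neg]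
  rw [h1, ip_add_left hu (hv.smul _) hw, ip_smul_left]
  simp; ring

/-- integral of the derivative of a C¹ compactly supported function vanishes -/
lemma integral_deriv_zero {f : ℝ → ℂ} (hf : ContDiff ℝ 1 f) (h2f : HasCompactSupport f) :
    ∫ x : ℝ, deriv f x = 0 := by
  have hint : Integrable (deriv f) :=
    (hf.continuous_deriv le_rfl).integrable_of_hasCompactSupport h2f.deriv
  have h1 := h2f.integral_Iic_deriv_eq hf (0 : ℝ)
  have h2 := h2f.integral_Ioi_deriv_eq hf (0 : ℝ)
  have := intervalIntegral.integral_Iic_add_Ioi (b := (0:ℝ)) hint.integrableOn hint.integrableOn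
  rw [h1, h2] at this
  linear_combination -this

lemma ip_q_symm (u v : ℝ → ℂ) : ip (qOp u) v = ip u (qOp v) := by
  unfold ip qOp
  congr 1; funext x
  simp [map_mul, Complex.conj_ofReal]; ring

lemma IsTest.deriv (hu : IsTest u) : IsTest (fun x => deriv u x) :=
  ⟨(contDiff_infty_iff_deriv.mp hu.1).2, hu.2.deriv⟩

lemma ip_p_symm (hu : IsTest u) (hv : IsTest v) : ip (pOp u) v = ip u (pOp v) := by
  -- the product g = conj u * v has integral of derivative zero
  set g : ℝ → ℂ := fun x => (starRingEnd ℂ) (u x) * v x with hg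
  have hgc : ContDiff ℝ 1 g := by
    have h1 : ContDiff ℝ 1 (fun x => (starRingEnd ℂ) (u x)) :=
      Complex.conjCLE.contDiff.comp (hu.1.of_le (by exact_mod_cast le_top))
    exact h1.mul (hv.1.of_le (by exact_mod_cast le_top))
  have hgs : HasCompactSupport g := hv.2.mul_left
  have hder : ∀ x, deriv g x
      = (starRingEnd ℂ) (deriv u x) * v x + (starRingEnd ℂ) (u x) * deriv v x := by
    intro x
    have h1 : HasDerivAt (fun y => (starRingEnd ℂ) (u y)) ((starRingEnd ℂ) (deriv u x)) x := by
      have := (hu.diff x).hasDerivAt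
      exact (Complex.conjCLE.hasFDerivAt.comp_hasDerivAt x this)
    have h2 := (hv.diff x).hasDerivAt
    exact (h1.mul h2).deriv
  have hzero : (∫ x : ℝ, ((starRingEnd ℂ) (deriv u x) * v x
      + (starRingEnd ℂ) (u x) * deriv v x)) = 0 := by
    rw [show (fun x : ℝ => ((starRingEnd ℂ) (deriv u x) * v x
      + (starRingEnd ℂ) (u x) * deriv v x)) = deriv g from (funext fun x => (hder x).symm)]
    exact integral_deriv_zero hgc hgs
  have hint1 : Integrable (fun x => (starRingEnd ℂ) (deriv u x) * v x) :=
    hu.deriv.integrable_conj_mul hv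
  have hint2 : Integrable (fun x => (starRingEnd ℂ) (u x) * deriv v x) :=
    hu.integrable_conj_mul hv.deriv
  have hAB : (∫ x : ℝ, (starRingEnd ℂ) (deriv u x) * v x)
      = - ∫ x : ℝ, (starRingEnd ℂ) (u x) * deriv v x := by
    have := integral_add hint1 hint2
    rw [hzero] at this
    linear_combination -this
  have e1 : ip (pOp u) v = Complex.I * ∫ x : ℝ, (starRingEnd ℂ) (deriv u x) * v x := by
    unfold ip pOp
    rw [← integral_const_mul]
    congr 1; funext x
    simp [map_mul]
    ring
  have e2 : ip u (pOp v) = -Complex.I * ∫ x : ℝ, (starRingEnd ℂ) (u x) * deriv v x := by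
    unfold ip pOp
    rw [← integral_const_mul]
    congr 1; funext x
    ring
  rw [e1, e2, hAB]
  ring

lemma pOp_add (hu : Differentiable ℝ u) (hv : Differentiable ℝ v) :
    pOp (u + v) = pOp u + pOp v := by
  funext x
  simp only [pOp, Pi.add_apply]
  rw [show (u+v) = fun y => u y + v y from rfl, deriv_fun_add (hu x) (hv x)]
  ring

lemma pOp_smul (c : ℂ) (hu : Differentiable ℝ u) : pOp (c • u) = c • pOp u := by
  funext x
  simp only [pOp, Pi.smul_apply, smul_eq_mul]
  rw [show c • u = fun y => c • u y from rfl, deriv_fun_const_smul c (hu x)]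
  simp [smul_eq_mul]; ring

lemma qOp_add : qOp (u + v) = qOp u + qOp v := by
  funext x; simp only [qOp, Pi.add_apply]; ring

lemma qOp_smul (c : ℂ) : qOp (c • u) = c • qOp u := by
  funext x; simp only [qOp, Pi.smul_apply, smul_eq_mul]; ring

/-- The basic commutation relation `p q = q p - i`. -/
lemma pq_comm (hu : Differentiable ℝ u) :
    pOp (qOp u) = qOp (pOp u) + (-Complex.I) • u := by
  funext x
  simp only [pOp, qOp, Pi.add_apply, Pi.smul_apply, smul_eq_mul]
  have h1 : HasDerivAt (fun y : ℝ => (y : ℂ)) 1 x := by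
    simpa using (hasDerivAt_id x).ofReal_comp
  have h2 := (hu x).hasDerivAt
  rw [show qOp u = fun y : ℝ => (y:ℂ) * u y from rfl, (h1.fun_mul h2).deriv]
  ring

lemma qp_comm (hu : Differentiable ℝ u) :
    qOp (pOp u) = pOp (qOp u) + Complex.I • u := by
  rw [pq_comm hu]; funext x; simp

/-- C = α p + β q with real coefficients. -/
def Cop (a b : ℝ) : Op := fun v => (a : ℂ) • pOp v + (b : ℂ) • qOp v

lemma IsTest.C {a b : ℝ} (hu : IsTest u) : IsTest (Cop a b u) :=
  (hu.p.smul _).add (hu.q.smul _)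

lemma ip_C_symm {a b : ℝ} (hu : IsTest u) (hv : IsTest v) :
    ip (Cop a b u) v = ip u (Cop a b v) := by
  unfold Cop
  rw [ip_add_left (hu.p.smul _) (hu.q.smul _) hv, ip_smul_left, ip_smul_left,
    ip_p_symm hu hv, ip_q_symm,
    ip_add_right hu (hv.p.smul _) (hv.q.smul _), ip_smul_right, ip_smul_right]
  simp [Complex.conj_ofReal]

lemma Nop_add (hu : IsTest u) (hv : IsTest v) : Nop (u + v) = Nop u + Nop v := by
  unfold Nop
  rw [pOp_add hu.diff hv.diff, pOp_add hu.p.diff hv.p.diff, qOp_add, qOp_add]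
  funext x; simp; ring

lemma Nop_smul (c : ℂ) (hu : IsTest u) : Nop (c • u) = c • Nop u := by
  unfold Nop
  rw [pOp_smul c hu.diff, pOp_smul c hu.p.diff, qOp_smul, qOp_smul]
  funext x; simp; ring

lemma commN_p (hu : IsTest u) :
    pOp (Nop u) = Nop (pOp u) + (-2 * Complex.I) • qOp u := by
  unfold Nop
  rw [pOp_add hu.p.p.diff hu.q.q.diff,
    pq_comm hu.q.diff, pq_comm hu.diff, qOp_add, qOp_smul]
  funext x; simp; ring

lemma commN_q (hu : IsTest u) :
    qOp (Nop u) = Nop (qOp u) + (2 * Complex.I) • pOp u := by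
  unfold Nop
  rw [qOp_add, qp_comm hu.p.diff, qp_comm hu.diff,
    pOp_add hu.q.p.diff ((hu.smul Complex.I).diff), pOp_smul _ hu.diff]
  funext x; simp; ring

lemma commN_C {a b : ℝ} (hu : IsTest u) :
    Cop a b (Nop u) = Nop (Cop a b u) + (2 * Complex.I) • Cop b (-a) u := by
  unfold Cop
  rw [Nop_add (hu.p.smul _) (hu.q.smul _), Nop_smul _ hu.p, Nop_smul _ hu.q,
    commN_p hu, commN_q hu]
  funext x; push_cast; simp; ring

lemma Cop_Cop {a b c d : ℝ} (hu : IsTest u) :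
    Cop a b (Cop c d u) = ((a*c : ℝ) : ℂ) • pOp (pOp u) + ((a*d : ℝ) : ℂ) • pOp (qOp u)
      + ((b*c : ℝ) : ℂ) • qOp (pOp u) + ((b*d : ℝ) : ℂ) • qOp (qOp u) := by
  unfold Cop
  rw [pOp_add (hu.p.smul _).diff (hu.q.smul _).diff, pOp_smul _ hu.p.diff,
    pOp_smul _ hu.q.diff, qOp_add, qOp_smul, qOp_smul]
  funext x; push_cast; simp; ring

lemma comm_CD {a b : ℝ} (hu : IsTest u) :
    Cop a b (Cop b (-a) u)
      = Cop b (-a) (Cop a b u) + (((a^2 + b^2 : ℝ) : ℂ) * Complex.I) • u := by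
  rw [Cop_Cop hu, Cop_Cop hu, pq_comm hu.diff]
  funext x; push_cast; simp; ring

lemma ip_N_symm (hu : IsTest u) (hv : IsTest v) : ip (Nop u) v = ip u (Nop v) := by
  unfold Nop
  rw [ip_add_left hu.p.p hu.q.q hv, ip_p_symm hu.p hv, ip_p_symm hu hv.p,
    ip_q_symm, ip_q_symm, ip_add_right hu hv.p.p hv.q.q]

/-- Lemma A: `⟨C²u, Nu⟩ + ⟨Nu, C²u⟩ = 2⟨Cu, N(Cu)⟩ - 2(a²+b²)⟨u,u⟩`. -/
lemma lemA {a b : ℝ} (hu : IsTest u) :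
    ip (Cop a b (Cop a b u)) (Nop u) + ip (Nop u) (Cop a b (Cop a b u))
      = 2 * ip (Cop a b u) (Nop (Cop a b u)) - 2 * ((a^2 + b^2 : ℝ) : ℂ) * ip u u := by
  have hC : IsTest (Cop a b u) := hu.C
  have hD : IsTest (Cop b (-a) u) := hu.C
  have h1 : ip (Cop a b (Cop a b u)) (Nop u) = ip (Cop a b u) (Cop a b (Nop u)) :=
    ip_C_symm hu.C hu.N
  have h2 : ip (Nop u) (Cop a b (Cop a b u)) = ip (Cop a b (Nop u)) (Cop a b u) :=
    (ip_C_symm hu.N hu.C).symm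
  rw [h1, h2, commN_C hu]
  rw [ip_add_right hC hC.N (hD.smul _),
    ip_add_left hC.N (hD.smul _) hC,
    ip_smul_right, ip_smul_left, ip_N_symm hC hC,
    ip_C_symm hu hD, ip_C_symm (a := b) (b := -a) hu hC, comm_CD hu,
    ip_add_right hu hC.C (hu.smul _), ip_smul_right]
  simp only [map_mul, Complex.conj_I, map_ofNat]
  linear_combination (2 * ((a^2 + b^2 : ℝ) : ℂ) * ip u u) * Complex.I_mul_I


def nrm2 (v : ℝ → ℂ) : ℝ := ∫ x : ℝ, Complex.normSq (v x)

lemma nrm2_nonneg (v : ℝ → ℂ) : 0 ≤ nrm2 v :=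
  integral_nonneg fun x => Complex.normSq_nonneg _

lemma ip_self (v : ℝ → ℂ) : ip v v = ((nrm2 v : ℝ) : ℂ) := by
  unfold ip nrm2
  calc ∫ x : ℝ, (starRingEnd ℂ) (v x) * v x
      = ∫ x : ℝ, ((Complex.normSq (v x) : ℝ) : ℂ) := by
        congr 1; funext x; rw [← Complex.normSq_eq_conj_mul_self]
    _ = (((∫ x : ℝ, Complex.normSq (v x)) : ℝ) : ℂ) := integral_ofReal

/-- Lemma B: `⟨v, Nv⟩ = ‖pv‖² + ‖qv‖²`. -/
lemma lemB (hv : IsTest v) :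
    ip v (Nop v) = ((nrm2 (pOp v) + nrm2 (qOp v) : ℝ) : ℂ) := by
  have : Nop v = pOp (pOp v) + qOp (qOp v) := rfl
  rw [this, ip_add_right hv hv.p.p hv.q.q, ← ip_p_symm hv hv.p, ← ip_q_symm,
    ip_self, ip_self]
  push_cast; ring

lemma Cop_one_zero (v : ℝ → ℂ) : Cop 1 0 v = pOp v := by
  funext x; simp [Cop]

lemma Cop_zero_one (v : ℝ → ℂ) : Cop 0 1 v = qOp v := by
  funext x; simp [Cop]

/-- Lemma C (real form): `‖p²u‖²+‖qpu‖²+‖pqu‖²+‖q²u‖² = ‖Nu‖² + 2‖u‖²`. -/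
lemma lemC (hu : IsTest u) :
    (nrm2 (pOp (pOp u)) + nrm2 (qOp (pOp u))) + (nrm2 (pOp (qOp u)) + nrm2 (qOp (qOp u)))
      = nrm2 (Nop u) + 2 * nrm2 u := by
  have e1 := lemA (a := 1) (b := 0) hu
  have e2 := lemA (a := 0) (b := 1) hu
  rw [Cop_one_zero, Cop_one_zero] at e1
  rw [Cop_zero_one, Cop_zero_one] at e2
  rw [lemB hu.p, ip_self] at e1
  rw [lemB hu.q, ip_self] at e2
  have hsum : ip (pOp (pOp u)) (Nop u) + ip (qOp (qOp u)) (Nop u) = ip (Nop u) (Nop u) :=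
    (ip_add_left hu.p.p hu.q.q hu.N).symm
  have hsum' : ip (Nop u) (pOp (pOp u)) + ip (Nop u) (qOp (qOp u)) = ip (Nop u) (Nop u) :=
    (ip_add_right hu.N hu.p.p hu.q.q).symm
  have key : (2 : ℂ) * ip (Nop u) (Nop u)
      = 2 * ((nrm2 (pOp (pOp u)) + nrm2 (qOp (pOp u)) : ℝ) : ℂ)
          - 2 * ((1^2 + 0^2 : ℝ) : ℂ) * ((nrm2 u : ℝ) : ℂ)
        + (2 * ((nrm2 (pOp (qOp u)) + nrm2 (qOp (qOp u)) : ℝ) : ℂ)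
          - 2 * ((0^2 + 1^2 : ℝ) : ℂ) * ((nrm2 u : ℝ) : ℂ)) := by
    rw [← e1, ← e2]
    linear_combination -hsum - hsum'
  rw [ip_self] at key
  have : ((nrm2 (Nop u) + 2 * nrm2 u : ℝ) : ℂ)
      = (((nrm2 (pOp (pOp u)) + nrm2 (qOp (pOp u)))
          + (nrm2 (pOp (qOp u)) + nrm2 (qOp (qOp u))) : ℝ) : ℂ) := by
    push_cast
    push_cast at key
    linear_combination key / 2
  exact_mod_cast this.symm

lemma X_apply (r s : ℝ) (u : ℝ → ℂ) :
    Xop r s u = (r : ℂ) • pOp (pOp u) + (pOp (qOp u) + qOp (pOp u)) + (s : ℂ) • qOp (qOp u) :=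
  rfl

lemma IsTest.X {r s : ℝ} (hu : IsTest u) : IsTest (Xop r s u) := by
  rw [X_apply]
  exact ((hu.p.p.smul _).add (hu.q.p.add hu.p.q)).add (hu.q.q.smul _)

lemma X_decomp (r s : ℝ) (hr : r ≠ 0) (hs : s ≠ 0) (hu : IsTest u) :
    Xop r s u = ((1/(2*s) : ℝ) : ℂ) • Cop 1 s (Cop 1 s u)
      + ((1/(2*r) : ℝ) : ℂ) • Cop r 1 (Cop r 1 u)
      + (((r - 1/s)/2 : ℝ) : ℂ) • pOp (pOp u)
      + (((s - 1/r)/2 : ℝ) : ℂ) • qOp (qOp u) := by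
  rw [X_apply, Cop_Cop hu, Cop_Cop hu]
  funext x
  simp only [Pi.add_apply, Pi.smul_apply, smul_eq_mul]
  push_cast
  field_simp
  ring

lemma cross_id (r s : ℝ) (hr : 0 < r) (hs : 0 < s) (hu : IsTest u) :
    ip (Xop r s u) (Nop u) + ip (Nop u) (Xop r s u)
      = (( (1/(2*s)) * (2*(nrm2 (pOp (Cop 1 s u)) + nrm2 (qOp (Cop 1 s u)))
              - 2*(1^2+s^2)*nrm2 u)
        + (1/(2*r)) * (2*(nrm2 (pOp (Cop r 1 u)) + nrm2 (qOp (Cop r 1 u)))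
              - 2*(r^2+1^2)*nrm2 u)
        + ((r - 1/s)/2) * (2*(nrm2 (pOp (pOp u)) + nrm2 (qOp (pOp u)))
              - 2*(1^2+0^2)*nrm2 u)
        + ((s - 1/r)/2) * (2*(nrm2 (pOp (qOp u)) + nrm2 (qOp (qOp u)))
              - 2*(0^2+1^2)*nrm2 u) : ℝ) : ℂ) := by
  have A1 := lemA (a := 1) (b := s) hu
  rw [lemB hu.C, ip_self] at A1
  have A2 := lemA (a := r) (b := 1) hu
  rw [lemB hu.C, ip_self] at A2
  have A3 := lemA (a := 1) (b := 0) hu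
  rw [Cop_one_zero, Cop_one_zero, lemB hu.p, ip_self] at A3
  have A4 := lemA (a := 0) (b := 1) hu
  rw [Cop_zero_one, Cop_zero_one, lemB hu.q, ip_self] at A4
  have h1 : IsTest (((1/(2*s) : ℝ) : ℂ) • Cop 1 s (Cop 1 s u)) := (hu.C.C).smul _
  have h2 : IsTest (((1/(2*r) : ℝ) : ℂ) • Cop r 1 (Cop r 1 u)) := (hu.C.C).smul _
  have h3 : IsTest ((((r - 1/s)/2 : ℝ) : ℂ) • pOp (pOp u)) := (hu.p.p).smul _
  have h4 : IsTest ((((s - 1/r)/2 : ℝ) : ℂ) • qOp (qOp u)) := (hu.q.q).smul _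
  rw [X_decomp r s hr.ne' hs.ne' hu,
    ip_add_left ((h1.add h2).add h3) h4 hu.N,
    ip_add_left (h1.add h2) h3 hu.N,
    ip_add_left h1 h2 hu.N,
    ip_add_right hu.N ((h1.add h2).add h3) h4,
    ip_add_right hu.N (h1.add h2) h3,
    ip_add_right hu.N h1 h2,
    ip_smul_left, ip_smul_left, ip_smul_left, ip_smul_left,
    ip_smul_right, ip_smul_right, ip_smul_right, ip_smul_right,
    Complex.conj_ofReal, Complex.conj_ofReal, Complex.conj_ofReal, Complex.conj_ofReal]
  push_cast
  push_cast at A1 A2 A3 A4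
  linear_combination (1/(2*(s:ℂ))) * A1 + (1/(2*(r:ℂ))) * A2
    + (((r:ℂ) - 1/(s:ℂ))/2) * A3 + (((s:ℂ) - 1/(r:ℂ))/2) * A4

lemma sub_expand (c : ℝ) (hv : IsTest v) (hw : IsTest w) :
    ((nrm2 (v - (c : ℂ) • w) : ℝ) : ℂ)
      = ((nrm2 v : ℝ) : ℂ) - (c : ℂ) * (ip v w + ip w v)
        + ((c^2 : ℝ) : ℂ) * ((nrm2 w : ℝ) : ℂ) := by
  rw [← ip_self, ← ip_self, ← ip_self,
    ip_sub_left hv (hw.smul _) (hv.sub (hw.smul _)),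
    ip_sub_right hv hv (hw.smul _), ip_sub_right (hw.smul _) hv (hw.smul _),
    ip_smul_left, ip_smul_right, ip_smul_right, Complex.conj_ofReal,
    ip_smul_left, Complex.conj_ofReal]
  push_cast
  ring

set_option maxHeartbeats 1000000 in
lemma final_real (r s : ℝ) (hr : 0 < r) (hs : 0 < s) (hrs : 1 < r * s)
    (G1 G2 gp gq n0 b a W : ℝ)
    (hG1 : 0 ≤ G1) (hG2 : 0 ≤ G2) (hgp : 0 ≤ gp) (hgq : 0 ≤ gq)
    (hn0 : 0 ≤ n0) (hb : 0 ≤ b)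
    (hW : W = (1/(2*s)) * (2*G1 - 2*(1^2+s^2)*n0)
        + (1/(2*r)) * (2*G2 - 2*(r^2+1^2)*n0)
        + ((r - 1/s)/2) * (2*gp - 2*(1^2+0^2)*n0)
        + ((s - 1/r)/2) * (2*gq - 2*(0^2+1^2)*n0))
    (hC : gp + gq = b + 2*n0)
    (hsub : ∀ c : ℝ, 0 ≤ a - c * W + c^2 * b) :
    (1/4) * min ((s - 1/r)^2) ((r - 1/s)^2) * b ≤ a + 2*(r*s - 1)*n0 := by
  set m1 := r - 1/s with hm1
  set m2 := s - 1/r with hm2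
  clear_value m1 m2
  have hm1pos : 0 < m1 := by
    rw [hm1]; rw [sub_pos, div_lt_iff₀ hs]; linarith
  have hm2pos : 0 < m2 := by
    rw [hm2]; rw [sub_pos, div_lt_iff₀ hr]; linarith
  have hWe : W = (1/s)*G1 + (1/r)*G2 + m1*gp + m2*gq - (2*r+2*s)*n0 := by
    rw [hW, hm1, hm2]; field_simp; ring
  have k1 : 0 ≤ (1/s)*G1 := by positivity
  have k2 : 0 ≤ (1/r)*G2 := by positivity
  rcases le_total m1 m2 with hcase | hcase <;>
    rw [hm1, hm2] at hcase
  · -- m = m1, need s ≥ 1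
    have hmin : min (m2^2) (m1^2) = m1^2 := by
      apply min_eq_right
      have h' : m1 ≤ m2 := by rw [hm1, hm2]; exact hcase
      exact pow_le_pow_left₀ hm1pos.le h' 2
    rw [hmin]
    have hrls : r ≤ s := by
      by_contra hcon
      push_neg at hcon
      have h3 : 0 < (r - s) * (r*s - 1) := mul_pos (by linarith) (by linarith)
      have h4 : r*s*(1/s) = r := by field_simp
      have h5 : r*s*(1/r) = s := by field_simp
      nlinarith [mul_le_mul_of_nonneg_left hcase (mul_pos hr hs).le]
    have hs1 : 1 ≤ s := by
      nlinarith [mul_le_mul_of_nonneg_right hrls hs.le]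
    -- key algebra
    have key : m1 * (r + s - m1) ≤ 2*(r*s - 1) := by
      have e2 : (2*(r*s-1) - m1*(r+s-m1)) * s^2 = (s^2-1)*(r*s-1) := by
        rw [hm1]; field_simp; ring
      have e3 : 0 ≤ (s^2-1)*(r*s-1) :=
        mul_nonneg (by nlinarith) (by linarith)
      nlinarith [mul_pos hs hs, e2, e3]
    -- bound W from below
    have k3 : m1*gq ≤ m2*gq := by
      rw [hm1, hm2]; exact mul_le_mul_of_nonneg_right hcase hgq
    have k4 : m1*gp + m1*gq = m1*b + 2*(m1*n0) := by linear_combination m1 * hC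
    have hWge : m1*b + 2*(m1*n0) - (2*r+2*s)*n0 ≤ W := by
      rw [hWe]; linarith
    have h5 := hsub (m1/2)
    have h6 : (m1/2) * (m1*b + 2*(m1*n0) - (2*r+2*s)*n0) ≤ (m1/2) * W :=
      mul_le_mul_of_nonneg_left hWge (by positivity)
    nlinarith [mul_le_mul_of_nonneg_right key hn0]
  · -- m = m2, need r ≥ 1
    have hmin : min (m2^2) (m1^2) = m2^2 := by
      apply min_eq_left
      have h' : m2 ≤ m1 := by rw [hm1, hm2]; exact hcase
      exact pow_le_pow_left₀ hm2pos.le h' 2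
    rw [hmin]
    have hrls : s ≤ r := by
      by_contra hcon
      push_neg at hcon
      have h3 : 0 < (s - r) * (r*s - 1) := mul_pos (by linarith) (by linarith)
      have h4 : r*s*(1/s) = r := by field_simp
      have h5 : r*s*(1/r) = s := by field_simp
      nlinarith [mul_le_mul_of_nonneg_left hcase (mul_pos hr hs).le]
    have hs1 : 1 ≤ r := by
      nlinarith [mul_le_mul_of_nonneg_right hrls hr.le]
    have key : m2 * (r + s - m2) ≤ 2*(r*s - 1) := by
      have e2 : (2*(r*s-1) - m2*(r+s-m2)) * r^2 = (r^2-1)*(r*s-1) := by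
        rw [hm2]; field_simp; ring
      have e3 : 0 ≤ (r^2-1)*(r*s-1) :=
        mul_nonneg (by nlinarith) (by linarith)
      nlinarith [mul_pos hr hr, e2, e3]
    have k3 : m2*gp ≤ m1*gp := by
      rw [hm1, hm2]; exact mul_le_mul_of_nonneg_right hcase hgp
    have k4 : m2*gp + m2*gq = m2*b + 2*(m2*n0) := by linear_combination m2 * hC
    have hWge : m2*b + 2*(m2*n0) - (2*r+2*s)*n0 ≤ W := by
      rw [hWe]; linarith
    have h5 := hsub (m2/2)
    have h6 : (m2/2) * (m2*b + 2*(m2*n0) - (2*r+2*s)*n0) ≤ (m2/2) * W :=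
      mul_le_mul_of_nonneg_left hWge (by positivity)
    nlinarith [mul_le_mul_of_nonneg_right key hn0]

/-- `‖X u‖² + 2(rs − 1)‖u‖² ≥ (1/4) min{(s − 1/r)², (r − 1/s)²} ‖(p²+q²)u‖²`. -/
theorem X_graph_norm_lower_bound (r s : ℝ) (hr : 0 < r) (hs : 0 < s) (hrs : 1 < r * s)
    (u : ℝ → ℂ) (hu : IsTest u) :
    (((1/4) * min ((s - 1/r)^2) ((r - 1/s)^2) : ℝ) : ℂ) * ip (Nop u) (Nop u)
      ≤ ip (Xop r s u) (Xop r s u) + 2 * ((r*s - 1 : ℝ) : ℂ) * ip u u := by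
  have hXu : IsTest (Xop r s u) := hu.X
  have hNu : IsTest (Nop u) := hu.N
  set G1 : ℝ := nrm2 (pOp (Cop 1 s u)) + nrm2 (qOp (Cop 1 s u)) with hG1def
  set G2 : ℝ := nrm2 (pOp (Cop r 1 u)) + nrm2 (qOp (Cop r 1 u)) with hG2def
  set gp : ℝ := nrm2 (pOp (pOp u)) + nrm2 (qOp (pOp u)) with hgpdef
  set gq : ℝ := nrm2 (pOp (qOp u)) + nrm2 (qOp (qOp u)) with hgqdef
  set W : ℝ := (1/(2*s)) * (2*G1 - 2*(1^2+s^2)*nrm2 u)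
      + (1/(2*r)) * (2*G2 - 2*(r^2+1^2)*nrm2 u)
      + ((r - 1/s)/2) * (2*gp - 2*(1^2+0^2)*nrm2 u)
      + ((s - 1/r)/2) * (2*gq - 2*(0^2+1^2)*nrm2 u) with hWdef
  have hcross : ip (Xop r s u) (Nop u) + ip (Nop u) (Xop r s u) = ((W : ℝ) : ℂ) :=
    cross_id r s hr hs hu
  have hsub : ∀ c : ℝ, 0 ≤ nrm2 (Xop r s u) - c * W + c^2 * nrm2 (Nop u) := by
    intro c
    have h1 := sub_expand c hXu hNu
    rw [hcross] at h1
    have h2 : nrm2 (Xop r s u - (c : ℂ) • Nop u)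
        = nrm2 (Xop r s u) - c * W + c^2 * nrm2 (Nop u) := by
      exact_mod_cast h1
    rw [← h2]; exact nrm2_nonneg _
  have hfin := final_real r s hr hs hrs G1 G2 gp gq (nrm2 u) (nrm2 (Nop u))
    (nrm2 (Xop r s u)) W
    (add_nonneg (nrm2_nonneg _) (nrm2_nonneg _))
    (add_nonneg (nrm2_nonneg _) (nrm2_nonneg _))
    (add_nonneg (nrm2_nonneg _) (nrm2_nonneg _))
    (add_nonneg (nrm2_nonneg _) (nrm2_nonneg _))
    (nrm2_nonneg _) (nrm2_nonneg _) hWdef (lemC hu) hsub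
  rw [ip_self, ip_self, ip_self]
  exact_mod_cast hfin
end
end
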